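/- For |q| < 1, a complex, and nonnegative integer k, if (y;q)_k denotes ∏_{j=0}^{k-1}(1 - y q^j), then for the r-fold product of geometric-type generating functions: the coefficient of x^n in ∏_{i=0}^{r-1} [∑_{k=0}^∞ (a;q)_k (ζ_r^i x)^k / (q;q)_k] equals the coefficient of x^n in ∑_{m=0}^∞ (a^r;q^r)_m x^{rm} / (q^r;q^r)_m, for all |x| < 1. -/

import Mathlib

set_option maxHeartbeats 1000000

open Finset Filter

noncomputable def qp (q x : ℂ) (k : ℕ) : ℂ := ∏ j ∈ Finset.range k, (1 - x * q ^ j)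

noncomputable def qpInf (q x : ℂ) : ℂ := ∏' j : ℕ, (1 - x * q ^ j)

noncomputable def qpz (q x : ℂ) (n : ℤ) : ℂ := qpInf q x / qpInf q (x * q ^ n)

noncomputable def zeta (r : ℕ) : ℂ := Complex.exp (2 * Real.pi * Complex.I / r)


lemma geom_sum_le_div {u : ℝ} (h0 : 0 ≤ u) (h1 : u < 1) (n : ℕ) :
    ∑ j ∈ Finset.range n, u ^ j ≤ 1 / (1 - u) := by
  rw [geom_sum_eq (by linarith : u ≠ 1)]
  have h2 : (0:ℝ) ≤ u ^ n := pow_nonneg h0 n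
  have h3 : (u ^ n - 1) / (u - 1) = (1 - u ^ n) / (1 - u) := by
    rw [← neg_div_neg_eq]; ring_nf
  rw [h3, div_le_div_iff₀ (by linarith) (by linarith)]
  nlinarith

lemma prod_one_add_le {s u : ℝ} (hs : 0 ≤ s) (h0 : 0 ≤ u) (h1 : u < 1) (n : ℕ) :
    ∏ j ∈ Finset.range n, (1 + s * u ^ j) ≤ Real.exp (s / (1 - u)) := by
  calc ∏ j ∈ Finset.range n, (1 + s * u ^ j)
      ≤ ∏ j ∈ Finset.range n, Real.exp (s * u ^ j) := by
        apply Finset.prod_le_prod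
        · intro j _; positivity
        · intro j _; linarith [Real.add_one_le_exp (s * u ^ j)]
    _ = Real.exp (∑ j ∈ Finset.range n, s * u ^ j) := by rw [Real.exp_sum]
    _ ≤ Real.exp (s / (1 - u)) := by
        apply Real.exp_le_exp.2
        rw [← Finset.mul_sum]
        calc s * ∑ j ∈ Finset.range n, u ^ j ≤ s * (1 / (1-u)) := by
              apply mul_le_mul_of_nonneg_left (geom_sum_le_div h0 h1 n) hs
          _ = s / (1-u) := by ring

lemma one_sub_pos_fac {t u : ℝ} (ht0 : 0 ≤ t) (ht : t < 1) (h0 : 0 ≤ u) (h1 : u ≤ 1) (j : ℕ) :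
    0 < 1 - t * u ^ j := by
  have : t * u ^ j ≤ t := by
    calc t * u ^ j ≤ t * 1 := by
          apply mul_le_mul_of_nonneg_left _ ht0
          exact pow_le_one₀ h0 h1
      _ = t := mul_one t
  linarith

lemma exp_neg_le_prod_one_sub {t u : ℝ} (ht0 : 0 ≤ t) (ht : t < 1) (h0 : 0 ≤ u) (h1 : u < 1)
    (n : ℕ) : Real.exp (-(t / ((1 - t) * (1 - u)))) ≤ ∏ j ∈ Finset.range n, (1 - t * u ^ j) := by
  have hfac : ∀ j : ℕ, 0 < 1 - t * u ^ j := fun j => one_sub_pos_fac ht0 ht h0 h1.le j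
  have hprod : 0 < ∏ j ∈ Finset.range n, (1 - t * u ^ j) :=
    Finset.prod_pos fun j _ => hfac j
  have key : (∏ j ∈ Finset.range n, (1 - t * u ^ j))⁻¹ ≤ Real.exp (t / ((1 - t) * (1 - u))) := by
    rw [← Finset.prod_inv_distrib]
    calc ∏ j ∈ Finset.range n, (1 - t * u ^ j)⁻¹
        ≤ ∏ j ∈ Finset.range n, Real.exp (t * u ^ j / (1 - t)) := by
          apply Finset.prod_le_prod
          · intro j _; exact inv_nonneg.2 (hfac j).le
          · intro j _
            have hz0 : 0 ≤ t * u ^ j := by positivity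
            have hzt : t * u ^ j ≤ t := by
              nlinarith [pow_le_one₀ h0 h1.le (n := j)]
            have h2 : (1 - t * u ^ j)⁻¹ ≤ 1 + t * u ^ j / (1 - t) := by
              rw [inv_eq_one_div, div_le_iff₀ (hfac j)]
              have h1t : 0 < 1 - t := by linarith
              rw [← sub_nonneg]
              have he : (1 + t * u ^ j / (1 - t)) * (1 - t * u ^ j) - 1
                  = (t * u ^ j) * (t - t * u ^ j) / (1 - t) := by field_simp; ring
              rw [he]
              exact div_nonneg (mul_nonneg hz0 (by linarith)) h1t.le
            calc (1 - t * u ^ j)⁻¹ ≤ 1 + t * u ^ j / (1 - t) := h2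
              _ ≤ Real.exp (t * u ^ j / (1 - t)) := by
                  linarith [Real.add_one_le_exp (t * u ^ j / (1 - t))]
      _ = Real.exp (∑ j ∈ Finset.range n, t * u ^ j / (1 - t)) := by rw [Real.exp_sum]
      _ ≤ Real.exp (t / ((1 - t) * (1 - u))) := by
          apply Real.exp_le_exp.2
          have : ∑ j ∈ Finset.range n, t * u ^ j / (1 - t)
              = (t / (1 - t)) * ∑ j ∈ Finset.range n, u ^ j := by
            rw [Finset.mul_sum]; apply Finset.sum_congr rfl; intro j _; ring
          rw [this]
          have h1t : 0 < 1 - t := by linarith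
          calc (t / (1 - t)) * ∑ j ∈ Finset.range n, u ^ j
              ≤ (t / (1 - t)) * (1 / (1 - u)) :=
                mul_le_mul_of_nonneg_left (geom_sum_le_div h0 h1 n) (by positivity)
            _ = t / ((1 - t) * (1 - u)) := by field_simp
  rw [Real.exp_neg]
  calc (Real.exp (t / ((1 - t) * (1 - u))))⁻¹
      ≤ ((∏ j ∈ Finset.range n, (1 - t * u ^ j))⁻¹)⁻¹ := by
        apply inv_anti₀ (by positivity) key
    _ = ∏ j ∈ Finset.range n, (1 - t * u ^ j) := inv_inv _

noncomputable def cc (q a : ℂ) (k : ℕ) : ℂ := qp q a k / qp q q k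

noncomputable def FF (q a : ℂ) (y : ℂ) : ℂ := ∑' k : ℕ, cc q a k * y ^ k

noncomputable def CC (q a : ℂ) : ℝ :=
  Real.exp (‖a‖ / (1 - ‖q‖)) * Real.exp (‖q‖ / ((1 - ‖q‖) * (1 - ‖q‖)))

variable {q a : ℂ}

lemma qp_q_factor_ne (hq : ‖q‖ < 1) (j : ℕ) : (1 : ℂ) - q * q ^ j ≠ 0 := by
  intro h
  have h2 : q * q ^ j = 1 := by linear_combination -h
  have : ‖q * q ^ j‖ < 1 := by
    rw [norm_mul, norm_pow]
    calc ‖q‖ * ‖q‖ ^ j ≤ ‖q‖ * 1 :=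
          mul_le_mul_of_nonneg_left (pow_le_one₀ (norm_nonneg q) hq.le) (norm_nonneg q)
      _ = ‖q‖ := mul_one _
      _ < 1 := hq
  rw [h2, norm_one] at this; exact lt_irrefl 1 this
lemma qp_q_ne_zero (hq : ‖q‖ < 1) (k : ℕ) : qp q q k ≠ 0 :=
  Finset.prod_ne_zero_iff.2 fun j _ => qp_q_factor_ne hq j

lemma norm_qp_le (hq : ‖q‖ < 1) (b : ℂ) (k : ℕ) :
    ‖qp q b k‖ ≤ Real.exp (‖b‖ / (1 - ‖q‖)) := by
  calc ‖qp q b k‖ ≤ ∏ j ∈ Finset.range k, ‖(1 : ℂ) - b * q ^ j‖ := norm_prod_le _ _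
    _ ≤ ∏ j ∈ Finset.range k, (1 + ‖b‖ * ‖q‖ ^ j) := by
        apply Finset.prod_le_prod (fun j _ => norm_nonneg _)
        intro j _
        calc ‖(1:ℂ) - b * q ^ j‖ ≤ ‖(1:ℂ)‖ + ‖b * q ^ j‖ := norm_sub_le _ _
          _ = 1 + ‖b‖ * ‖q‖ ^ j := by rw [norm_one, norm_mul, norm_pow]
    _ ≤ Real.exp (‖b‖ / (1 - ‖q‖)) := prod_one_add_le (norm_nonneg b) (norm_nonneg q) hq k

lemma norm_qp_q_ge (hq : ‖q‖ < 1) (k : ℕ) :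
    Real.exp (-(‖q‖ / ((1 - ‖q‖) * (1 - ‖q‖)))) ≤ ‖qp q q k‖ := by
  calc Real.exp (-(‖q‖ / ((1 - ‖q‖) * (1 - ‖q‖))))
      ≤ ∏ j ∈ Finset.range k, (1 - ‖q‖ * ‖q‖ ^ j) :=
        exp_neg_le_prod_one_sub (norm_nonneg q) hq (norm_nonneg q) hq k
    _ ≤ ∏ j ∈ Finset.range k, ‖(1 : ℂ) - q * q ^ j‖ := by
        apply Finset.prod_le_prod
        · intro j _
          exact (one_sub_pos_fac (norm_nonneg q) hq (norm_nonneg q) hq.le j).le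
        · intro j _
          calc 1 - ‖q‖ * ‖q‖ ^ j = ‖(1:ℂ)‖ - ‖q * q ^ j‖ := by
                rw [norm_one, norm_mul, norm_pow]
            _ ≤ ‖(1:ℂ) - q * q ^ j‖ := norm_sub_norm_le _ _
    _ = ‖qp q q k‖ := by rw [qp, norm_prod]

lemma CC_pos : 0 < CC q a := by unfold CC; positivity

lemma norm_cc_le (hq : ‖q‖ < 1) (k : ℕ) : ‖cc q a k‖ ≤ CC q a := by
  rw [cc, norm_div, CC]
  have h1 := norm_qp_le hq a k
  have h2 := norm_qp_q_ge hq k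
  have h3 : 0 < ‖qp q q k‖ := lt_of_lt_of_le (Real.exp_pos _) h2
  rw [div_le_iff₀ h3]
  calc ‖qp q a k‖ ≤ Real.exp (‖a‖ / (1 - ‖q‖)) := h1
    _ = Real.exp (‖a‖ / (1 - ‖q‖)) * Real.exp (‖q‖ / ((1-‖q‖)*(1-‖q‖)))
        * Real.exp (-(‖q‖ / ((1-‖q‖)*(1-‖q‖)))) := by
        rw [mul_assoc, ← Real.exp_add]; simp
    _ ≤ Real.exp (‖a‖ / (1 - ‖q‖)) * Real.exp (‖q‖ / ((1-‖q‖)*(1-‖q‖))) * ‖qp q q k‖ := by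
        apply mul_le_mul_of_nonneg_left h2 (by positivity)

lemma summable_cc (hq : ‖q‖ < 1) {y : ℂ} (hy : ‖y‖ < 1) :
    Summable (fun k : ℕ => cc q a k * y ^ k) := by
  apply Summable.of_norm_bounded (g := fun k => CC q a * ‖y‖ ^ k)
  · exact (summable_geometric_of_lt_one (norm_nonneg y) hy).mul_left _
  · intro k
    rw [norm_mul, norm_pow]
    exact mul_le_mul_of_nonneg_right (norm_cc_le hq k) (by positivity)
lemma norm_mul_lt_one (hq : ‖q‖ < 1) {y : ℂ} (hy : ‖y‖ < 1) : ‖q * y‖ < 1 := by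
  rw [norm_mul]
  calc ‖q‖ * ‖y‖ ≤ 1 * ‖y‖ := mul_le_mul_of_nonneg_right hq.le (norm_nonneg y)
    _ = ‖y‖ := one_mul _
    _ < 1 := hy

lemma cc_rec (hq : ‖q‖ < 1) (k : ℕ) :
    cc q a (k + 1) * (1 - q * q ^ k) = cc q a k * (1 - a * q ^ k) := by
  have h1 : qp q q k ≠ 0 := qp_q_ne_zero hq k
  have h2 : (1 : ℂ) - q * q ^ k ≠ 0 := qp_q_factor_ne hq k
  rw [cc, cc, qp, qp, Finset.prod_range_succ, Finset.prod_range_succ, ← qp, ← qp]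
  rw [div_mul_eq_mul_div (qp q a k * (1 - a * q ^ k)), mul_div_mul_right _ _ h2]
  ring

lemma funceq (hq : ‖q‖ < 1) {y : ℂ} (hy : ‖y‖ < 1) :
    (1 - y) * FF q a y = (1 - a * y) * FF q a (q * y) := by
  have hqy : ‖q * y‖ < 1 := norm_mul_lt_one hq hy
  have S1 : Summable (fun k : ℕ => cc q a k * y ^ k) := summable_cc hq hy
  have S2 : Summable (fun k : ℕ => cc q a k * (q * y) ^ k) := summable_cc hq hqy
  set d : ℕ → ℂ := fun k => cc q a k * y ^ k - cc q a k * (q * y) ^ k with hd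
  set e : ℕ → ℂ := fun k => cc q a k * (1 - a * q ^ k) * y ^ (k + 1) with he
  have Sd : Summable d := S1.sub S2
  have hde : ∀ k, d (k + 1) = e k := by
    intro k
    have := cc_rec (a := a) hq k
    simp only [hd, he]
    calc cc q a (k+1) * y ^ (k+1) - cc q a (k+1) * (q * y) ^ (k+1)
        = (cc q a (k+1) * (1 - q * q ^ k)) * y ^ (k+1) := by ring
      _ = (cc q a k * (1 - a * q ^ k)) * y ^ (k+1) := by rw [this]
      _ = e k := by simp only [he]
  have Sd1 : Summable (fun k => d (k + 1)) := (summable_nat_add_iff 1).2 Sd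
  have Se : Summable e := by
    apply Sd1.congr; intro k; exact hde k
  have htd : ∑' k, d k = ∑' k, e k := by
    rw [Sd.tsum_eq_zero_add]
    have hd0 : d 0 = 0 := by simp [hd]
    rw [hd0, zero_add]
    exact tsum_congr hde
  have key : ∑' k : ℕ, ((1 - y) * (cc q a k * y ^ k) - (1 - a * y) * (cc q a k * (q * y) ^ k))
      = 0 := by
    have hterm : ∀ k : ℕ, (1 - y) * (cc q a k * y ^ k) - (1 - a * y) * (cc q a k * (q * y) ^ k)
        = d k - e k := by
      intro k; simp only [hd, he]; ring
    calc ∑' k : ℕ, ((1 - y) * (cc q a k * y ^ k) - (1 - a * y) * (cc q a k * (q * y) ^ k))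
        = ∑' k : ℕ, (d k - e k) := tsum_congr hterm
      _ = ∑' k, d k - ∑' k, e k := Summable.tsum_sub Sd Se
      _ = 0 := by rw [htd, sub_self]
  have expand : (1 - y) * FF q a y - (1 - a * y) * FF q a (q * y)
      = ∑' k : ℕ, ((1 - y) * (cc q a k * y ^ k) - (1 - a * y) * (cc q a k * (q * y) ^ k)) := by
    rw [FF, FF, ← tsum_mul_left, ← tsum_mul_left]
    exact (Summable.tsum_sub (S1.mul_left _) (S2.mul_left _)).symm
  have := expand.trans key
  linear_combination this

lemma FF_zero : FF q a 0 = 1 := by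
  rw [FF]
  rw [tsum_eq_single 0 (by intro k hk; simp [zero_pow hk])]
  simp [cc, qp]

lemma FF_tendsto (hq : ‖q‖ < 1) : Tendsto (FF q a) (nhds 0) (nhds 1) := by
  rw [tendsto_iff_norm_sub_tendsto_zero]
  apply squeeze_zero' (Eventually.of_forall fun y => norm_nonneg _)
    (g := fun y => (2 * CC q a) * ‖y‖)
  · have hev : ∀ᶠ y : ℂ in nhds 0, ‖y‖ ≤ 1/2 := by
      filter_upwards [Metric.ball_mem_nhds (0:ℂ) (by norm_num : (0:ℝ) < 1/2)] with y hy
      rw [Metric.mem_ball, dist_zero_right] at hy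
      exact hy.le
    filter_upwards [hev] with y hy2
    have hy : ‖y‖ < 1 := lt_of_le_of_lt hy2 (by norm_num)
    have S1 : Summable (fun k : ℕ => cc q a k * y ^ k) := summable_cc hq hy
    have S1' : Summable (fun k : ℕ => cc q a (k+1) * y ^ (k+1)) :=
      (summable_nat_add_iff 1).2 S1
    have hsplit : FF q a y - 1 = ∑' k : ℕ, cc q a (k+1) * y ^ (k+1) := by
      rw [FF, S1.tsum_eq_zero_add]
      have : cc q a 0 * y ^ 0 = 1 := by simp [cc, qp]
      rw [this]; ring
    rw [hsplit]
    have Sg : Summable (fun k : ℕ => CC q a * ‖y‖ ^ (k+1)) :=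
      ((summable_geometric_of_lt_one (norm_nonneg y) hy).mul_left _).comp_injective
        (add_left_injective 1)
    calc ‖∑' k : ℕ, cc q a (k+1) * y ^ (k+1)‖
        ≤ ∑' k : ℕ, ‖cc q a (k+1) * y ^ (k+1)‖ := by
          apply norm_tsum_le_tsum_norm
          exact S1'.norm
      _ ≤ ∑' k : ℕ, CC q a * ‖y‖ ^ (k+1) := by
          refine S1'.norm.tsum_le_tsum ?_ Sg
          intro k
          rw [norm_mul, norm_pow]
          exact mul_le_mul_of_nonneg_right (norm_cc_le hq _) (by positivity)
      _ = (CC q a * ‖y‖) * ∑' k : ℕ, ‖y‖ ^ k := by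
          rw [← tsum_mul_left]
          apply tsum_congr; intro k; rw [pow_succ']; ring
      _ = (CC q a * ‖y‖) * (1 - ‖y‖)⁻¹ := by rw [tsum_geometric_of_lt_one (norm_nonneg y) hy]
      _ ≤ 2 * CC q a * ‖y‖ := by
          have h2 : (1 - ‖y‖)⁻¹ ≤ 2 := by
            rw [inv_le_comm₀ (by linarith) (by norm_num)]
            linarith
          have h0 : 0 ≤ CC q a * ‖y‖ := mul_nonneg CC_pos.le (norm_nonneg y)
          calc (CC q a * ‖y‖) * (1 - ‖y‖)⁻¹ ≤ (CC q a * ‖y‖) * 2 :=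
                mul_le_mul_of_nonneg_left h2 h0
            _ = 2 * CC q a * ‖y‖ := by ring
  · have : Tendsto (fun y : ℂ => ‖y‖) (nhds 0) (nhds 0) := by
      simpa using (continuous_norm (E := ℂ)).tendsto 0
    simpa using this.const_mul (2 * CC q a)

lemma norm_zeta (r : ℕ) : ‖zeta r‖ = 1 := by
  rw [zeta, show 2 * (Real.pi:ℂ) * Complex.I / r = ((2 * Real.pi / r : ℝ) : ℂ) * Complex.I by
    push_cast; ring]
  rw [Complex.norm_exp_ofReal_mul_I]

lemma prod_one_sub_zeta (r : ℕ) (hr : 1 ≤ r) (c : ℂ) :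
    ∏ i ∈ Finset.range r, (1 - c * zeta r ^ i) = 1 - c ^ r := by
  have h : IsPrimitiveRoot (zeta r) r := Complex.isPrimitiveRoot_exp r (by omega)
  have : NeZero r := ⟨by omega⟩
  have key := h.pow_sub_pow_eq_prod_sub_mul (x := (1:ℂ)) (y := c) (by omega)
  rw [one_pow] at key
  rw [key]
  refine Finset.prod_nbij (s := Finset.range r) (t := Polynomial.nthRootsFinset r (1:ℂ))
    (f := fun i => 1 - c * zeta r ^ i) (g := fun μ => 1 - μ * c) (fun i => zeta r ^ i) ?_
    h.injOn_pow ?_ ?_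
  · intro i _
    exact (Polynomial.mem_nthRootsFinset (by omega) (1:ℂ)).2
      (by rw [← pow_mul, mul_comm, pow_mul, h.pow_eq_one, one_pow])
  · intro μ hμ
    obtain ⟨i, hi, hie⟩ := h.eq_pow_of_pow_eq_one ((Polynomial.mem_nthRootsFinset (by omega) (1:ℂ)).1 hμ)
    exact ⟨i, by simpa using hi, hie⟩
  · intro i _
    simp [mul_comm]

noncomputable def GG (q a : ℂ) (r : ℕ) (x : ℂ) : ℂ :=
  ∏ i ∈ Finset.range r, FF q a (zeta r ^ i * x)

noncomputable def HH (q a : ℂ) (r : ℕ) (x : ℂ) : ℂ := FF (q ^ r) (a ^ r) (x ^ r)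

variable {r : ℕ}

lemma funceq_G (hq : ‖q‖ < 1) (hr : 1 ≤ r) {x : ℂ} (hx : ‖x‖ < 1) :
    (1 - x ^ r) * GG q a r x = (1 - (a * x) ^ r) * GG q a r (q * x) := by
  have key : ∀ i ∈ Finset.range r,
      (1 - x * zeta r ^ i) * FF q a (zeta r ^ i * x)
        = (1 - (a * x) * zeta r ^ i) * FF q a (zeta r ^ i * (q * x)) := by
    intro i _
    have hy : ‖zeta r ^ i * x‖ < 1 := by
      rw [norm_mul, norm_pow, norm_zeta, one_pow, one_mul]; exact hx
    have h := funceq (q := q) (a := a) hq hy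
    rw [show zeta r ^ i * (q * x) = q * (zeta r ^ i * x) by ring]
    linear_combination h
  have h2 := Finset.prod_congr rfl key
  rw [Finset.prod_mul_distrib, Finset.prod_mul_distrib, prod_one_sub_zeta r hr x,
    prod_one_sub_zeta r hr (a * x)] at h2
  rw [GG, GG]
  exact h2

lemma funceq_H (hq : ‖q‖ < 1) (hr : 1 ≤ r) {x : ℂ} (hx : ‖x‖ < 1) :
    (1 - x ^ r) * HH q a r x = (1 - (a * x) ^ r) * HH q a r (q * x) := by
  have hqr : ‖q ^ r‖ < 1 := by
    rw [norm_pow]; exact pow_lt_one₀ (norm_nonneg q) hq (by omega)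
  have hxr : ‖x ^ r‖ < 1 := by
    rw [norm_pow]; exact pow_lt_one₀ (norm_nonneg x) hx (by omega)
  have h := funceq (q := q ^ r) (a := a ^ r) hqr hxr
  rw [HH, HH, mul_pow q x, mul_pow a x]
  convert h using 2 <;> ring

noncomputable def KK (q a : ℂ) (r : ℕ) (x : ℂ) : ℂ := GG q a r x - HH q a r x

noncomputable def phi (q a : ℂ) (r : ℕ) (z : ℂ) : ℂ := (1 - (a * z) ^ r) / (1 - z ^ r)

lemma one_sub_pow_ne (hr : 1 ≤ r) {z : ℂ} (hz : ‖z‖ < 1) : (1 : ℂ) - z ^ r ≠ 0 := by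
  intro h
  have h2 : z ^ r = 1 := by linear_combination -h
  have : ‖z ^ r‖ < 1 := by rw [norm_pow]; exact pow_lt_one₀ (norm_nonneg z) hz (by omega)
  rw [h2, norm_one] at this; exact lt_irrefl 1 this

lemma funceq_K (hq : ‖q‖ < 1) (hr : 1 ≤ r) {z : ℂ} (hz : ‖z‖ < 1) :
    KK q a r z = phi q a r z * KK q a r (q * z) := by
  have hne : (1 : ℂ) - z ^ r ≠ 0 := one_sub_pow_ne hr hz
  have h1 := funceq_G (a := a) hq hr hz
  have h2 := funceq_H (a := a) hq hr hz
  rw [KK, KK, phi]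
  field_simp
  rw [show z * q = q * z by ring]
  linear_combination h1 - h2

lemma iter_K (hq : ‖q‖ < 1) (hr : 1 ≤ r) {x : ℂ} (hx : ‖x‖ < 1) (n : ℕ) :
    KK q a r x = (∏ j ∈ Finset.range n, phi q a r (q ^ j * x)) * KK q a r (q ^ n * x) := by
  induction n with
  | zero => simp
  | succ n ih =>
    have hz : ‖q ^ n * x‖ < 1 := by
      rw [norm_mul, norm_pow]
      calc ‖q‖ ^ n * ‖x‖ ≤ 1 * ‖x‖ :=
            mul_le_mul_of_nonneg_right (pow_le_one₀ (norm_nonneg q) hq.le) (norm_nonneg x)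
        _ = ‖x‖ := one_mul _
        _ < 1 := hx
    rw [ih, funceq_K hq hr hz, Finset.prod_range_succ]
    rw [show q * (q ^ n * x) = q ^ (n + 1) * x by ring]
    ring
lemma phi_prod_bound (hq : ‖q‖ < 1) (hr : 1 ≤ r) {x : ℂ} (hx : ‖x‖ < 1) (n : ℕ) :
    ‖∏ j ∈ Finset.range n, phi q a r (q ^ j * x)‖
      ≤ Real.exp ((‖a‖ ^ r * ‖x‖ ^ r) / (1 - ‖q‖ ^ r))
        / Real.exp (-(‖x‖ ^ r / ((1 - ‖x‖ ^ r) * (1 - ‖q‖ ^ r)))) := by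
  set s : ℝ := ‖a‖ ^ r * ‖x‖ ^ r with hs
  set t : ℝ := ‖x‖ ^ r with ht
  set u : ℝ := ‖q‖ ^ r with hu
  have hs0 : 0 ≤ s := by positivity
  have ht0 : 0 ≤ t := by positivity
  have hu0 : 0 ≤ u := by positivity
  have ht1 : t < 1 := pow_lt_one₀ (norm_nonneg x) hx (by omega)
  have hu1 : u < 1 := pow_lt_one₀ (norm_nonneg q) hq (by omega)
  have hnum : ∀ j : ℕ, ‖(1 : ℂ) - (a * (q ^ j * x)) ^ r‖ ≤ 1 + s * u ^ j := by
    intro j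
    calc ‖(1 : ℂ) - (a * (q ^ j * x)) ^ r‖ ≤ ‖(1:ℂ)‖ + ‖(a * (q ^ j * x)) ^ r‖ := norm_sub_le _ _
      _ = 1 + s * u ^ j := by
          rw [norm_one, norm_pow, norm_mul, norm_mul, norm_pow, hs, hu]
          rw [mul_pow, mul_pow, ← pow_mul, ← pow_mul, mul_comm j r, pow_mul]
          ring
  have hden : ∀ j : ℕ, 1 - t * u ^ j ≤ ‖(1 : ℂ) - (q ^ j * x) ^ r‖ := by
    intro j
    calc 1 - t * u ^ j = ‖(1:ℂ)‖ - ‖(q ^ j * x) ^ r‖ := by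
          rw [norm_one, norm_pow, norm_mul, norm_pow, ht, hu]
          rw [mul_pow, ← pow_mul, ← pow_mul, mul_comm j r, pow_mul]
          ring
      _ ≤ ‖(1:ℂ) - (q ^ j * x) ^ r‖ := norm_sub_norm_le _ _
  have hdenpos : ∀ j : ℕ, 0 < 1 - t * u ^ j := fun j =>
    one_sub_pos_fac ht0 ht1 hu0 hu1.le j
  calc ‖∏ j ∈ Finset.range n, phi q a r (q ^ j * x)‖
      = (∏ j ∈ Finset.range n, ‖(1 : ℂ) - (a * (q ^ j * x)) ^ r‖)
        / ∏ j ∈ Finset.range n, ‖(1 : ℂ) - (q ^ j * x) ^ r‖ := by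
        rw [norm_prod, ← Finset.prod_div_distrib]
        apply Finset.prod_congr rfl
        intro j _
        rw [phi, norm_div]
    _ ≤ Real.exp (s / (1 - u)) / Real.exp (-(t / ((1 - t) * (1 - u)))) := by
        apply div_le_div₀ (Real.exp_pos _).le
        · calc ∏ j ∈ Finset.range n, ‖(1 : ℂ) - (a * (q ^ j * x)) ^ r‖
              ≤ ∏ j ∈ Finset.range n, (1 + s * u ^ j) :=
                Finset.prod_le_prod (fun j _ => norm_nonneg _) (fun j _ => hnum j)
            _ ≤ Real.exp (s / (1 - u)) := prod_one_add_le hs0 hu0 hu1 n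
        · exact Real.exp_pos _
        · calc Real.exp (-(t / ((1 - t) * (1 - u))))
              ≤ ∏ j ∈ Finset.range n, (1 - t * u ^ j) :=
                exp_neg_le_prod_one_sub ht0 ht1 hu0 hu1 n
            _ ≤ ∏ j ∈ Finset.range n, ‖(1 : ℂ) - (q ^ j * x) ^ r‖ :=
                Finset.prod_le_prod (fun j _ => (hdenpos j).le) (fun j _ => hden j)

lemma GG_eq_HH (hq : ‖q‖ < 1) (hr : 1 ≤ r) {x : ℂ} (hx : ‖x‖ < 1) :
    GG q a r x = HH q a r x := by
  have hqr : ‖q ^ r‖ < 1 := by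
    rw [norm_pow]; exact pow_lt_one₀ (norm_nonneg q) hq (by omega)
  have hKtend : Tendsto (fun z => KK q a r z) (nhds 0) (nhds 0) := by
    have hG : Tendsto (fun z => GG q a r z) (nhds 0) (nhds 1) := by
      have h1 : Tendsto (fun z => GG q a r z) (nhds 0)
          (nhds (∏ _i ∈ Finset.range r, (1:ℂ))) := by
        apply tendsto_finset_prod
        intro i _
        have harg : Tendsto (fun z : ℂ => zeta r ^ i * z) (nhds 0) (nhds 0) := by
          have := (continuous_const.mul continuous_id (M := ℂ) (f := fun _ => zeta r ^ i)).tendsto 0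
          simpa [Pi.mul_def] using this
        exact (FF_tendsto hq).comp harg
      simpa using h1
    have hH : Tendsto (fun z => HH q a r z) (nhds 0) (nhds 1) := by
      have harg : Tendsto (fun z : ℂ => z ^ r) (nhds 0) (nhds 0) := by
        have := (continuous_pow r (M := ℂ)).tendsto 0
        simpa [zero_pow (by omega : r ≠ 0)] using this
      exact (FF_tendsto hqr).comp harg
    have := hG.sub hH
    simpa [KK] using this
  have hseq : Tendsto (fun n : ℕ => q ^ n * x) atTop (nhds 0) := by
    have := (tendsto_pow_atTop_nhds_zero_of_norm_lt_one hq).mul_const x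
    simpa using this
  have hKseq : Tendsto (fun n : ℕ => KK q a r (q ^ n * x)) atTop (nhds 0) :=
    hKtend.comp hseq
  set M : ℝ := Real.exp ((‖a‖ ^ r * ‖x‖ ^ r) / (1 - ‖q‖ ^ r))
      / Real.exp (-(‖x‖ ^ r / ((1 - ‖x‖ ^ r) * (1 - ‖q‖ ^ r)))) with hM
  have hbound : ∀ n : ℕ, ‖KK q a r x‖ ≤ M * ‖KK q a r (q ^ n * x)‖ := by
    intro n
    rw [iter_K hq hr hx n, norm_mul]
    exact mul_le_mul_of_nonneg_right (phi_prod_bound hq hr hx n) (norm_nonneg _)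
  have hlim : Tendsto (fun n : ℕ => M * ‖KK q a r (q ^ n * x)‖) atTop (nhds 0) := by
    have := hKseq.norm.const_mul M
    simpa using this
  have hle : ‖KK q a r x‖ ≤ 0 := ge_of_tendsto hlim (Eventually.of_forall hbound)
  have : KK q a r x = 0 := norm_le_zero_iff.1 hle
  rw [KK] at this
  exact sub_eq_zero.1 this

theorem stmt18 (q a : ℂ) (hq : ‖q‖ < 1) (r : ℕ) (hr : 2 ≤ r)
    (x : ℂ) (hx : ‖x‖ < 1) :
    ∏ i ∈ Finset.range r, (∑' k : ℕ, qp q a k / qp q q k * (zeta r ^ i * x) ^ k)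
      = ∑' m : ℕ, qp (q ^ r) (a ^ r) m / qp (q ^ r) (q ^ r) m * x ^ (r * m) := by
  have hr1 : 1 ≤ r := by omega
  have hL : (∏ i ∈ Finset.range r, (∑' k : ℕ, qp q a k / qp q q k * (zeta r ^ i * x) ^ k))
      = GG q a r x := rfl
  have hR : (∑' m : ℕ, qp (q ^ r) (a ^ r) m / qp (q ^ r) (q ^ r) m * x ^ (r * m))
      = HH q a r x := by
    rw [HH, FF]
    apply tsum_congr
    intro m
    rw [cc, pow_mul]
  rw [hL, hR]
  exact GG_eq_HH hq hr1 hx
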